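/- For every integer n ≥ 3: (a) the kernel of J(n,0), viewed as a linear map ℝ⁴ → ℝ⁴, is the one-dimensional subspace spanned by e₄ = (0,0,0,1); (b) λ = 0 is a simple root of the polynomial λ ↦ det J(n,λ), i.e. det J(n,0) = 0 while the derivative of λ ↦ det J(n,λ) at λ = 0 is nonzero (this is the statement that J(n,λ)⁻¹ has a simple pole at λ = 0). -/

import Mathlib

open Matrix

/-- The indicial family `I_{g₍₀₎}(λ)` of the linearized gauge-fixed Einstein operator,
in the block decomposition of symmetric 2-tensors (all blocks scalar, with the trace
replaced by multiplication by `n`). -/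
noncomputable def J (n : ℕ) (lam : ℝ) : Matrix (Fin 4) (Fin 4) ℝ :=
  (lam ^ 2 - (n : ℝ) * lam) • (1 : Matrix (Fin 4) (Fin 4) ℝ) +
    !![-4 * lam + 2 * ((n : ℝ) + 2), 0, 2 * (n : ℝ) * (lam - 2), 0;
       0, -4 * lam + 3 * ((n : ℝ) + 1), 0, 0;
       (-2 : ℝ), 0, 2 * (n : ℝ), 0;
       0, 0, 0, 0]

lemma Jexp (n : ℕ) (lam : ℝ) : _root_.J n lam =
    !![lam ^ 2 - n * lam - 4 * lam + 2 * (n + 2), 0, 2 * n * (lam - 2), 0;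
       0, lam ^ 2 - n * lam - 4 * lam + 3 * (n + 1), 0, 0;
       (-2 : ℝ), 0, lam ^ 2 - n * lam + 2 * n, 0;
       0, 0, 0, lam ^ 2 - n * lam] := by
  ext i j
  fin_cases i <;> fin_cases j <;>
    simp [_root_.J, Matrix.one_apply, Matrix.vecHead, Matrix.vecTail] <;> ring

lemma detJ (n : ℕ) (lam : ℝ) : (_root_.J n lam).det =
      (lam ^ 2 - n * lam) *
        ((lam ^ 2 - n * lam - 4 * lam + 3 * (n + 1)) *
          ((lam ^ 2 - n * lam - 4 * lam + 2 * (n + 2)) * (lam ^ 2 - n * lam + 2 * n)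
            - (2 * n * (lam - 2)) * (-2))) := by
  rw [Jexp]
  rw [Matrix.det_succ_row_zero]
  simp [Fin.sum_univ_succ, Matrix.det_fin_three, Fin.succAbove,
    Matrix.vecHead, Matrix.vecTail]
  ring


/-- (a) The kernel of `J(n,0) : ℝ⁴ → ℝ⁴` is spanned by `e₄ = (0,0,0,1)`;
(b) `λ = 0` is a simple root of `λ ↦ det J(n,λ)`: the determinant vanishes at `0`
but its derivative there does not (so `J(n,λ)⁻¹` has a simple pole at `λ = 0`). -/
theorem kernel_and_simple_pole_at_zero (n : ℕ) (hn : 3 ≤ n) :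
    LinearMap.ker (J n 0).mulVecLin = Submodule.span ℝ {![0, 0, 0, (1 : ℝ)]} ∧
    (J n 0).det = 0 ∧
    deriv (fun lam : ℝ => (J n lam).det) 0 ≠ 0 := by
  have hn3 : (3 : ℝ) ≤ (n : ℝ) := by exact_mod_cast hn
  have hnpos : (0 : ℝ) < n := by linarith
  refine ⟨?_, ?_, ?_⟩
  · -- kernel
    apply le_antisymm
    · intro x hx
      have hx' : (J n 0).mulVec x = 0 := hx
      rw [Jexp] at hx'
      have h0 := congrFun hx' 0
      have h1 := congrFun hx' 1
      have h2 := congrFun hx' 2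
      simp [Matrix.mulVec, dotProduct, Fin.sum_univ_succ,
        Matrix.vecHead, Matrix.vecTail] at h0 h1 h2
      have hx1 : x 1 = 0 := by
        rcases h1 with h | h
        · linarith
        · exact h
      have hx2 : x 2 = 0 := by
        have e : 2 * (n : ℝ) ^ 2 * x 2 = 0 := by
          linear_combination h0 + ((n : ℝ) + 2) * h2
        have h2n : (2 * (n : ℝ) ^ 2) ≠ 0 := by positivity
        exact (mul_eq_zero.mp e).resolve_left h2n
      have hx0 : x 0 = 0 := by
        linear_combination (-(1 : ℝ) / 2) * h2 + (n : ℝ) * hx2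
      rw [Submodule.mem_span_singleton]
      refine ⟨x 3, ?_⟩
      funext i
      fin_cases i <;> simp [hx0, hx1, hx2]
    · rw [Submodule.span_le, Set.singleton_subset_iff]
      have : (J n 0).mulVec ![0, 0, 0, 1] = 0 := by
        rw [Jexp]
        funext i
        fin_cases i <;>
          simp [Matrix.mulVec, dotProduct, Fin.sum_univ_succ,
            Matrix.vecHead, Matrix.vecTail]
      exact this
  · rw [detJ]; ring
  · have hfun : (fun lam : ℝ => (J n lam).det) =
        fun lam : ℝ =>
          (lam ^ 2 - n * lam) *
            ((lam ^ 2 - n * lam - 4 * lam + 3 * (n + 1)) *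
              ((lam ^ 2 - n * lam - 4 * lam + 2 * (n + 2)) * (lam ^ 2 - n * lam + 2 * n)
                - (2 * n * (lam - 2)) * (-2))) := funext (detJ n)
    have hu : HasDerivAt (fun l : ℝ => l ^ 2 - (n : ℝ) * l) (-(n : ℝ)) 0 := by
      have := (hasDerivAt_pow 2 (0 : ℝ)).sub ((hasDerivAt_id (0 : ℝ)).const_mul (n : ℝ))
      refine this.congr_deriv ?_
      simp
    have hA : HasDerivAt (fun l : ℝ => l ^ 2 - (n : ℝ) * l - 4 * l + 3 * ((n : ℝ) + 1))
        (-(n : ℝ) - 4) 0 := by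
      simpa using (hu.sub ((hasDerivAt_id (0 : ℝ)).const_mul 4)).add_const (3 * ((n : ℝ) + 1))
    have hB : HasDerivAt (fun l : ℝ => l ^ 2 - (n : ℝ) * l - 4 * l + 2 * ((n : ℝ) + 2))
        (-(n : ℝ) - 4) 0 := by
      simpa using (hu.sub ((hasDerivAt_id (0 : ℝ)).const_mul 4)).add_const (2 * ((n : ℝ) + 2))
    have hC : HasDerivAt (fun l : ℝ => l ^ 2 - (n : ℝ) * l + 2 * (n : ℝ)) (-(n : ℝ)) 0 :=
      hu.add_const _
    have hD : HasDerivAt (fun l : ℝ => 2 * (n : ℝ) * (l - 2)) (2 * (n : ℝ)) 0 := by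
      simpa using ((hasDerivAt_id (0 : ℝ)).sub_const 2).const_mul (2 * (n : ℝ))
    have H := hu.mul (hA.mul ((hB.mul hC).sub (hD.mul_const (-2))))
    have hval : deriv (fun lam : ℝ => (J n lam).det) 0 =
        -12 * (n : ℝ) ^ 3 * ((n : ℝ) + 1) := by
      rw [hfun]
      refine H.deriv.trans ?_
      simp only [Pi.mul_apply, Pi.sub_apply]
      ring
    rw [hval]
    have : (0 : ℝ) < 12 * (n : ℝ) ^ 3 * ((n : ℝ) + 1) := by positivity
    nlinarith
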